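/- Let U and W be finite-dimensional complex vector spaces, α ∈ U and β ∈ W nonzero, and p, q ≥ 0. Consider the cochain complex T with T^k = ⊕_{r+s=k, r≥p, s≥q} Λ^r U ⊗ Λ^s W and differential D acting on the component of bidegree (r,s) by L_α + (−1)^r L_β. Then D∘D = 0 and H^k(T) = 0 for every k ≥ p+q+1, i.e. T is exact in all degrees strictly above its bottom degree p+q. -/

import Mathlib

open scoped TensorProduct

variable {U W : Type} [AddCommGroup U] [Module ℂ U] [AddCommGroup W] [Module ℂ W]

/-- Left wedge multiplication `L_α = α ∧ -` on exterior powers. -/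
noncomputable def Lmul (α : U) (a : ℕ) : ⋀[ℂ]^a U →ₗ[ℂ] ⋀[ℂ]^(a + 1) U :=
  (LinearMap.mulLeft ℂ (ExteriorAlgebra.ι ℂ α)).restrict fun x hx => by
    have h1 : ExteriorAlgebra.ι ℂ α ∈ ⋀[ℂ]^1 U := by
      show ExteriorAlgebra.ι ℂ α ∈ LinearMap.range (ExteriorAlgebra.ι ℂ (M := U)) ^ 1
      rw [pow_one]; exact LinearMap.mem_range_self _ α
    exact (Nat.add_comm 1 a) ▸ SetLike.mul_mem_graded h1 hx

lemma Lmul_Lmul (α : U) (a : ℕ) (x : ⋀[ℂ]^a U) :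
    Lmul α (a + 1) (Lmul α a x) = 0 := by
  apply Subtype.ext
  show ExteriorAlgebra.ι ℂ α * (ExteriorAlgebra.ι ℂ α * (x : ExteriorAlgebra ℂ U)) = 0
  rw [← mul_assoc, ExteriorAlgebra.ι_sq_zero, zero_mul]

/-- `BX U W r s = Λ^r U ⊗ Λ^s W` for `r, s ≥ 0`, and the zero space otherwise. -/
noncomputable def BX (U W : Type) [AddCommGroup U] [Module ℂ U] [AddCommGroup W] [Module ℂ W] :
    ℤ → ℤ → Type
  | Int.ofNat a, Int.ofNat b => ⋀[ℂ]^a U ⊗[ℂ] ⋀[ℂ]^b W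
  | Int.ofNat _, Int.negSucc _ => PUnit
  | Int.negSucc _, _ => PUnit

noncomputable instance : ∀ r s, AddCommGroup (BX U W r s)
  | Int.ofNat a, Int.ofNat b => inferInstanceAs (AddCommGroup (⋀[ℂ]^a U ⊗[ℂ] ⋀[ℂ]^b W))
  | Int.ofNat _, Int.negSucc _ => inferInstanceAs (AddCommGroup PUnit)
  | Int.negSucc _, Int.ofNat _ => inferInstanceAs (AddCommGroup PUnit)
  | Int.negSucc _, Int.negSucc _ => inferInstanceAs (AddCommGroup PUnit)

noncomputable instance : ∀ r s, Module ℂ (BX U W r s)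
  | Int.ofNat a, Int.ofNat b => inferInstanceAs (Module ℂ (⋀[ℂ]^a U ⊗[ℂ] ⋀[ℂ]^b W))
  | Int.ofNat _, Int.negSucc _ => inferInstanceAs (Module ℂ PUnit)
  | Int.negSucc _, Int.ofNat _ => inferInstanceAs (Module ℂ PUnit)
  | Int.negSucc _, Int.negSucc _ => inferInstanceAs (Module ℂ PUnit)

/-- The operator `L_α = (α ∧ -) ⊗ id` on `BX U W`. -/
noncomputable def Bd1 (α : U) : ∀ r s, BX U W r s →ₗ[ℂ] BX U W (r + 1) s
  | Int.ofNat a, Int.ofNat b => TensorProduct.map (Lmul α a) (LinearMap.id (M := ⋀[ℂ]^b W))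
  | Int.ofNat _, Int.negSucc _ => 0
  | Int.negSucc _, _ => 0

/-- The operator `L_β = id ⊗ (β ∧ -)` on `BX U W`. -/
noncomputable def Bd2u (β : W) : ∀ r s, BX U W r s →ₗ[ℂ] BX U W r (s + 1)
  | Int.ofNat a, Int.ofNat b => TensorProduct.map (LinearMap.id (M := ⋀[ℂ]^a U)) (Lmul β b)
  | Int.ofNat _, Int.negSucc _ => 0
  | Int.negSucc _, _ => 0

/-- The signed operator `(-1)^r L_β = (-1)^r (id ⊗ (β ∧ -))` on `BX U W`. -/
noncomputable def Bd2s (β : W) : ∀ r s, BX U W r s →ₗ[ℂ] BX U W r (s + 1)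
  | Int.ofNat a, Int.ofNat b =>
      ((-1 : ℂ) ^ a) • TensorProduct.map (LinearMap.id (M := ⋀[ℂ]^a U)) (Lmul β b)
  | Int.ofNat _, Int.negSucc _ => 0
  | Int.negSucc _, _ => 0

/-- Transport of `BX` along equalities of the indices. -/
noncomputable def BXcast {r s r' s' : ℤ} (h1 : r = r') (h2 : s = s') :
    BX U W r s ≃ₗ[ℂ] BX U W r' s' := by
  subst h1; subst h2; exact LinearEquiv.refl ℂ _

open DirectSum

/-- Index set for degree `k` of the complex `T`: bidegrees `(r,s)` with `r+s = k`,
`r ≥ p`, `s ≥ q`. -/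
abbrev TIdx (p q k : ℤ) := {rs : ℤ × ℤ // rs.1 + rs.2 = k ∧ p ≤ rs.1 ∧ q ≤ rs.2}

/-- The degree-`k` piece `T^k = ⊕_{r+s=k, r≥p, s≥q} Λ^r U ⊗ Λ^s W`. -/
noncomputable abbrev TL (U W : Type) [AddCommGroup U] [Module ℂ U] [AddCommGroup W]
    [Module ℂ W] (p q k : ℤ) : Type :=
  ⨁ i : TIdx p q k, BX U W i.1.1 i.1.2

/-- The differential `D` of `T`, acting on the component of bidegree `(r,s)` by
`L_α + (-1)^r L_β`. -/
noncomputable def TD {U W : Type} [AddCommGroup U] [Module ℂ U] [AddCommGroup W]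
    [Module ℂ W] (α : U) (β : W) (p q k : ℤ) :
    TL U W p q k →ₗ[ℂ] TL U W p q (k + 1) :=
  DirectSum.toModule ℂ _ _ fun i =>
    ((DirectSum.lof ℂ (TIdx p q (k + 1)) (fun j => BX U W j.1.1 j.1.2)
        ⟨(i.1.1 + 1, i.1.2), by have h := i.2; dsimp only at h ⊢; omega⟩).comp
      (Bd1 α i.1.1 i.1.2))
    +
    ((DirectSum.lof ℂ (TIdx p q (k + 1)) (fun j => BX U W j.1.1 j.1.2)
        ⟨(i.1.1, i.1.2 + 1), by have h := i.2; dsimp only at h ⊢; omega⟩).comp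
      (Bd2s β i.1.1 i.1.2))

/-- Transport of the pieces of `T` along an equality of degrees. -/
noncomputable def TLcast (U W : Type) [AddCommGroup U] [Module ℂ U] [AddCommGroup W] [Module ℂ W]
    (p q : ℤ) {k k' : ℤ} (h : k = k') : TL U W p q k ≃ₗ[ℂ] TL U W p q k' := by
  subst h; exact LinearEquiv.refl ℂ _

open CliffordAlgebra in
lemma contract_mem (f : Module.Dual ℂ U) :
    ∀ (n : ℕ) (x : ExteriorAlgebra ℂ U), x ∈ ⋀[ℂ]^n U →
      contractLeft (Q := (0 : QuadraticForm ℂ U)) f x ∈ ⋀[ℂ]^(n - 1) U := by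
  intro n
  induction n with
  | zero =>
    intro x hx
    have hx' : x ∈ LinearMap.range (ExteriorAlgebra.ι ℂ (M := U)) ^ 0 := hx
    rw [pow_zero, Submodule.mem_one] at hx'
    obtain ⟨r, rfl⟩ := hx'
    rw [contractLeft_algebraMap]
    exact Submodule.zero_mem _
  | succ n ih =>
    intro x hx
    have hx' : x ∈ LinearMap.range (ExteriorAlgebra.ι ℂ (M := U)) *
        LinearMap.range (ExteriorAlgebra.ι ℂ (M := U)) ^ n := by
      rw [← pow_succ']; exact hx
    clear hx
    induction hx' using Submodule.mul_induction_on' with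
    | mem_mul_mem m hm y hy =>
      obtain ⟨u, rfl⟩ := hm
      rw [contractLeft_ι_mul]
      refine Submodule.sub_mem _ (Submodule.smul_mem _ _ ?_) ?_
      · simpa using hy
      · rcases n with _ | n
        · -- y ∈ ⋀^0, contract y = 0
          have hy' : y ∈ LinearMap.range (ExteriorAlgebra.ι ℂ (M := U)) ^ 0 := hy
          rw [pow_zero, Submodule.mem_one] at hy'
          obtain ⟨r, rfl⟩ := hy'
          rw [contractLeft_algebraMap, mul_zero]
          exact Submodule.zero_mem _
        · have h2 := ih y hy
          simp only [Nat.succ_sub_one] at h2 ⊢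
          have h1 : ExteriorAlgebra.ι ℂ u ∈ ⋀[ℂ]^1 U := by
            show ExteriorAlgebra.ι ℂ u ∈ LinearMap.range (ExteriorAlgebra.ι ℂ (M := U)) ^ 1
            rw [pow_one]; exact LinearMap.mem_range_self _ u
          exact (Nat.add_comm 1 n) ▸ SetLike.mul_mem_graded h1 h2
    | add x y _ _ hx hy
      => rw [map_add]; exact Submodule.add_mem _ hx hy

/-- contraction on exterior powers -/
noncomputable def Lcon (f : Module.Dual ℂ U) (a : ℕ) : ⋀[ℂ]^(a+1) U →ₗ[ℂ] ⋀[ℂ]^a U :=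
  (CliffordAlgebra.contractLeft (Q := (0 : QuadraticForm ℂ U)) f).restrict fun x hx =>
    contract_mem f (a+1) x hx

lemma Lcon_Lmul_add_Lmul_Lcon (f : Module.Dual ℂ U) (α : U) (a : ℕ) (x : ⋀[ℂ]^(a+1) U) :
    Lcon f (a+1) (Lmul α (a+1) x) + Lmul α a (Lcon f a x) = f α • x := by
  apply Subtype.ext
  show CliffordAlgebra.contractLeft f (ExteriorAlgebra.ι ℂ α * (x : ExteriorAlgebra ℂ U))
      + ExteriorAlgebra.ι ℂ α * (CliffordAlgebra.contractLeft f (x : ExteriorAlgebra ℂ U))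
      = f α • (x : ExteriorAlgebra ℂ U)
  rw [CliffordAlgebra.contractLeft_ι_mul]
  abel

set_option maxHeartbeats 1000000
set_option synthInstance.maxHeartbeats 400000

/-- Contraction `ι_f ⊗ id` on `BX`. -/
noncomputable def Bh (f : Module.Dual ℂ U) : ∀ r s, BX U W (r + 1) s →ₗ[ℂ] BX U W r s
  | Int.ofNat a, Int.ofNat b =>
      TensorProduct.map (Lcon f a) (LinearMap.id (M := ⋀[ℂ]^b W))
  | Int.ofNat _, Int.negSucc _ => 0
  | Int.negSucc _, _ => 0

/-- Contraction `id ⊗ ι_g` on `BX`. -/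
noncomputable def Bh2 (g : Module.Dual ℂ W) : ∀ r s, BX U W r (s + 1) →ₗ[ℂ] BX U W r s
  | Int.ofNat a, Int.ofNat b =>
      TensorProduct.map (LinearMap.id (M := ⋀[ℂ]^a U)) (Lcon g b)
  | Int.ofNat _, Int.negSucc _ => 0
  | Int.negSucc _, _ => 0

@[simp] lemma BXcast_rfl {r s : ℤ} (x : BX U W r s) : BXcast rfl rfl x = x := rfl

lemma BXcast_cancel {r r' s s' : ℤ} (h1 : r = r') (h2 : s = s') (x : BX U W r' s') :
    BXcast h1 h2 (BXcast h1.symm h2.symm x) = x := by subst h1; subst h2; rfl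

lemma Bd1_cast (α : U) {r r' s s' : ℤ} (h1 : r = r') (h2 : s = s') (x : BX U W r s) :
    Bd1 α r' s' (BXcast h1 h2 x) = BXcast (by rw [h1]) h2 (Bd1 α r s x) := by
  subst h1; subst h2; rfl

lemma Bd2s_cast (β : W) {r r' s s' : ℤ} (h1 : r = r') (h2 : s = s') (x : BX U W r s) :
    Bd2s β r' s' (BXcast h1 h2 x) = BXcast h1 (by rw [h2]) (Bd2s β r s x) := by
  subst h1; subst h2; rfl

lemma Bd2u_cast (β : W) {r r' s s' : ℤ} (h1 : r = r') (h2 : s = s') (x : BX U W r s) :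
    Bd2u β r' s' (BXcast h1 h2 x) = BXcast h1 (by rw [h2]) (Bd2u β r s x) := by
  subst h1; subst h2; rfl

lemma Bh_cast (f : Module.Dual ℂ U) {r r' s s' : ℤ} (h1 : r = r') (h2 : s = s')
    (x : BX U W (r + 1) s) :
    Bh f r' s' (BXcast (show r + 1 = r' + 1 by rw [h1]) h2 x) = BXcast h1 h2 (Bh f r s x) := by
  subst h1; subst h2; rfl

/-- `L_α ∘ L_α = 0` on `BX`. -/
lemma Bd1_Bd1 (α : U) (r s : ℤ) (x : BX U W r s) :
    Bd1 α (r + 1) s (Bd1 α r s x) = 0 := by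
  rcases r with a | a
  · rcases s with b | b
    · show Bd1 α (Int.ofNat (a+1)) (Int.ofNat b) (Bd1 α (Int.ofNat a) (Int.ofNat b) x) = 0
      show (TensorProduct.map (Lmul α (a+1)) LinearMap.id)
        ((TensorProduct.map (Lmul α a) LinearMap.id) x) = 0
      induction x using TensorProduct.induction_on with
      | zero => simp
      | tmul u w => simp [Lmul_Lmul]
      | add u w hu hw => simp [map_add, hu, hw]
    · show Bd1 α (Int.ofNat (a+1)) (Int.negSucc b) ((0 : _ →ₗ[ℂ] _) x) = 0
      rw [LinearMap.zero_apply, map_zero]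
  · show Bd1 α (Int.negSucc a + 1) s ((0 : _ →ₗ[ℂ] _) x) = 0
    rw [LinearMap.zero_apply, map_zero]

/-- `L_β^s ∘ L_β^s = 0` on `BX`. -/
lemma Bd2s_Bd2s (β : W) (r s : ℤ) (x : BX U W r s) :
    Bd2s β r (s + 1) (Bd2s β r s x) = 0 := by
  rcases r with a | a
  · rcases s with b | b
    · show Bd2s β (Int.ofNat a) (Int.ofNat (b+1)) (Bd2s β (Int.ofNat a) (Int.ofNat b) x) = 0
      revert x
      show ∀ x : ⋀[ℂ]^a U ⊗[ℂ] ⋀[ℂ]^b W, ((-1 : ℂ) ^ a • TensorProduct.map LinearMap.id (Lmul β (b+1)))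
        (((-1 : ℂ) ^ a • TensorProduct.map LinearMap.id (Lmul β b)) x) = 0
      intro x
      simp only [LinearMap.smul_apply, map_smul]
      rw [smul_smul]
      convert smul_zero _
      induction x using TensorProduct.induction_on with
      | zero => simp
      | tmul u w => simp [Lmul_Lmul]
      | add u w hu hw => simp [map_add, hu, hw]
    · show Bd2s β (Int.ofNat a) (Int.negSucc b + 1) ((0 : _ →ₗ[ℂ] _) x) = 0
      rw [LinearMap.zero_apply, map_zero]
  · show Bd2s β (Int.negSucc a) (s + 1) ((0 : _ →ₗ[ℂ] _) x) = 0
    rw [LinearMap.zero_apply, map_zero]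

/-- Mixed cancellation: `(-1)^{r+1} L_β ∘ L_α + L_α ∘ (-1)^r L_β = 0`. -/
lemma Bd_mixed (α : U) (β : W) (r s : ℤ) (x : BX U W r s) :
    Bd2s β (r + 1) s (Bd1 α r s x) + Bd1 α r (s + 1) (Bd2s β r s x) = 0 := by
  rcases r with a | a
  · rcases s with b | b
    · revert x
      show ∀ x : ⋀[ℂ]^a U ⊗[ℂ] ⋀[ℂ]^b W, ((-1 : ℂ) ^ (a+1) • TensorProduct.map (LinearMap.id (M := ⋀[ℂ]^(a+1) U)) (Lmul β b))
          ((TensorProduct.map (Lmul α a) (LinearMap.id (M := ⋀[ℂ]^b W))) x)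
        + (TensorProduct.map (Lmul α a) (LinearMap.id (M := ⋀[ℂ]^(b+1) W)))
          (((-1 : ℂ) ^ a • TensorProduct.map (LinearMap.id (M := ⋀[ℂ]^a U)) (Lmul β b)) x) = 0
      intro x
      simp only [LinearMap.smul_apply, map_smul, pow_succ]
      induction x using TensorProduct.induction_on with
      | zero => simp
      | tmul u w =>
        simp only [TensorProduct.map_tmul, LinearMap.id_apply, ← TensorProduct.smul_tmul',
          pow_succ, mul_smul, neg_smul, one_smul]
        module
      | add u w hu hw =>
        simp only [map_add, smul_add] at hu hw ⊢
        rw [add_add_add_comm, hu, hw, add_zero]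
    · show Bd2s β (Int.ofNat a + 1) (Int.negSucc b) ((0 : _ →ₗ[ℂ] _) x)
        + Bd1 α (Int.ofNat a) (Int.negSucc b + 1) ((0 : _ →ₗ[ℂ] _) x) = 0
      rw [LinearMap.zero_apply, map_zero, LinearMap.zero_apply, map_zero, add_zero]
  · show Bd2s β (Int.negSucc a + 1) s ((0 : _ →ₗ[ℂ] _) x)
      + Bd1 α (Int.negSucc a) (s + 1) ((0 : _ →ₗ[ℂ] _) x) = 0
    rw [LinearMap.zero_apply, map_zero, LinearMap.zero_apply, map_zero, add_zero]

/-- Homotopy identity in the first factor on `BX`. -/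
lemma Bh_Bd1 (f : Module.Dual ℂ U) (α : U) (hf : f α = 1) (a : ℕ) (s : ℤ)
    (x : BX U W ((a : ℤ) + 1) s) :
    Bh f ((a : ℤ) + 1) s (Bd1 α ((a : ℤ) + 1) s x) + Bd1 α (a : ℤ) s (Bh f (a : ℤ) s x) = x := by
  rcases s with b | b
  · show (TensorProduct.map (Lcon f (a+1)) (LinearMap.id (M := ⋀[ℂ]^b W)))
        ((TensorProduct.map (Lmul α (a+1)) (LinearMap.id (M := ⋀[ℂ]^b W))) x)
      + (TensorProduct.map (Lmul α a) (LinearMap.id (M := ⋀[ℂ]^b W)))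
        ((TensorProduct.map (Lcon f a) (LinearMap.id (M := ⋀[ℂ]^b W))) x) = x
    induction x using TensorProduct.induction_on with
    | zero => simp
    | tmul u w =>
      simp only [TensorProduct.map_tmul, LinearMap.id_apply, ← TensorProduct.add_tmul]
      rw [Lcon_Lmul_add_Lmul_Lcon f α a u, hf, one_smul]
    | add u w hu hw => simp only [map_add]; rw [add_add_add_comm, hu, hw]
  · show (0 : BX U W ((a : ℤ) + 1) (Int.negSucc b)) + 0 = x
    exact Subsingleton.elim (α := PUnit) _ _

/-- Homotopy/differential cross-cancellation on `BX`. -/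
lemma Bh_Bd2s (f : Module.Dual ℂ U) (β : W) (a : ℕ) (s : ℤ) (x : BX U W ((a : ℤ) + 1) s) :
    Bh f (a : ℤ) (s + 1) (Bd2s β ((a : ℤ) + 1) s x) + Bd2s β (a : ℤ) s (Bh f (a : ℤ) s x) = 0 := by
  rcases s with b | b
  · revert x
    show ∀ x : ⋀[ℂ]^(a+1) U ⊗[ℂ] ⋀[ℂ]^b W, (TensorProduct.map (Lcon f a) (LinearMap.id (M := ⋀[ℂ]^(b+1) W)))
        (((-1 : ℂ) ^ (a+1) • TensorProduct.map (LinearMap.id (M := ⋀[ℂ]^(a+1) U)) (Lmul β b)) x)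
      + ((-1 : ℂ) ^ a • TensorProduct.map (LinearMap.id (M := ⋀[ℂ]^a U)) (Lmul β b))
        ((TensorProduct.map (Lcon f a) (LinearMap.id (M := ⋀[ℂ]^b W))) x) = 0
    intro x
    simp only [LinearMap.smul_apply, map_smul]
    induction x using TensorProduct.induction_on with
    | zero => simp
    | tmul u w =>
      simp only [TensorProduct.map_tmul, LinearMap.id_apply, ← TensorProduct.smul_tmul',
        pow_succ, mul_smul, neg_smul, one_smul]
      module
    | add u w hu hw =>
      simp only [map_add, smul_add] at hu hw ⊢
      rw [add_add_add_comm, hu, hw, add_zero]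
  · show Bh f (a : ℤ) (Int.negSucc b + 1) ((0 : _ →ₗ[ℂ] _) x)
      + Bd2s β (a : ℤ) (Int.negSucc b) ((0 : _ →ₗ[ℂ] _) x) = 0
    rw [LinearMap.zero_apply, map_zero, LinearMap.zero_apply, map_zero, add_zero]

/-- Homotopy identity in the second factor on `BX` (unsigned). -/
lemma Bh2_Bd2u (g : Module.Dual ℂ W) (β : W) (hg : g β = 1) (a b : ℕ)
    (x : BX U W (a : ℤ) ((b : ℤ) + 1)) :
    Bh2 g (a : ℤ) ((b : ℤ) + 1) (Bd2u β (a : ℤ) ((b : ℤ) + 1) x)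
      + Bd2u β (a : ℤ) (b : ℤ) (Bh2 g (a : ℤ) (b : ℤ) x) = x := by
  show (TensorProduct.map (LinearMap.id (M := ⋀[ℂ]^a U)) (Lcon g (b+1)))
      ((TensorProduct.map (LinearMap.id (M := ⋀[ℂ]^a U)) (Lmul β (b+1))) x)
    + (TensorProduct.map (LinearMap.id (M := ⋀[ℂ]^a U)) (Lmul β b))
      ((TensorProduct.map (LinearMap.id (M := ⋀[ℂ]^a U)) (Lcon g b)) x) = x
  induction x using TensorProduct.induction_on with
  | zero => simp
  | tmul u w =>
    simp only [TensorProduct.map_tmul, LinearMap.id_apply, ← TensorProduct.tmul_add]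
    rw [Lcon_Lmul_add_Lmul_Lcon g β b w, hg, one_smul]
  | add u w hu hw => simp only [map_add]; rw [add_add_add_comm, hu, hw]

/-- `L_α ⊗ id` commutes with `id ⊗ ι_g`. -/
lemma Bd1_Bh2 (α : U) (g : Module.Dual ℂ W) (a b : ℕ) (x : BX U W (a : ℤ) ((b : ℤ) + 1)) :
    Bd1 α (a : ℤ) (b : ℤ) (Bh2 g (a : ℤ) (b : ℤ) x)
      = Bh2 g ((a : ℤ) + 1) (b : ℤ) (Bd1 α (a : ℤ) ((b : ℤ) + 1) x) := by
  show (TensorProduct.map (Lmul α a) (LinearMap.id (M := ⋀[ℂ]^b W)))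
      ((TensorProduct.map (LinearMap.id (M := ⋀[ℂ]^a U)) (Lcon g b)) x)
    = (TensorProduct.map (LinearMap.id (M := ⋀[ℂ]^(a+1) U)) (Lcon g b))
      ((TensorProduct.map (Lmul α a) (LinearMap.id (M := ⋀[ℂ]^(b+1) W))) x)
  induction x using TensorProduct.induction_on with
  | zero => simp
  | tmul u w => simp [TensorProduct.map_tmul]
  | add u w hu hw => simp only [map_add]; rw [hu, hw]

lemma Bd2s_eq_smul_Bd2u (β : W) (a b : ℕ) (x : BX U W (a : ℤ) (b : ℤ)) :
    Bd2s β (a : ℤ) (b : ℤ) x = ((-1 : ℂ) ^ a) • Bd2u β (a : ℤ) (b : ℤ) x := rfl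

lemma Bd2s_eq_smul_Bd2u' (β : W) (a b : ℕ) (x : BX U W (a : ℤ) ((b : ℤ) + 1)) :
    Bd2s β (a : ℤ) ((b : ℤ) + 1) x = ((-1 : ℂ) ^ a) • Bd2u β (a : ℤ) ((b : ℤ) + 1) x := rfl

/-- Second-stage step: a bidegree-`(a, b+1)` element killed by both `L_α ⊗ id` and
`id ⊗ L_β` is `(-1)^a (id ⊗ L_β)` of an element killed by `L_α ⊗ id`. -/
lemma stage2 (α : U) (β : W) (g : Module.Dual ℂ W) (hg : g β = 1) (a b : ℕ)
    (w : BX U W (a : ℤ) ((b : ℤ) + 1))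
    (h1 : Bd1 α (a : ℤ) ((b : ℤ) + 1) w = 0) (h2 : Bd2u β (a : ℤ) ((b : ℤ) + 1) w = 0) :
    ∃ u : BX U W (a : ℤ) (b : ℤ),
      Bd2s β (a : ℤ) (b : ℤ) u = w ∧ Bd1 α (a : ℤ) (b : ℤ) u = 0 := by
  refine ⟨((-1 : ℂ) ^ a) • Bh2 g (a : ℤ) (b : ℤ) w, ?_, ?_⟩
  · rw [map_smul, Bd2s_eq_smul_Bd2u, smul_smul, ← pow_add]
    have : ((-1 : ℂ)) ^ (a + a) = 1 := by
      rw [pow_add, ← mul_pow]; norm_num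
    rw [this, one_smul]
    have := Bh2_Bd2u g β hg a b w
    rw [h2, map_zero, zero_add] at this
    exact this
  · rw [map_smul, Bd1_Bh2, h1, map_zero, smul_zero]

open DirectSum

/-- The homotopy `h = ι_f ⊗ id` (where defined) on `T`. -/
noncomputable def Th (f : Module.Dual ℂ U) (p q k : ℤ) :
    TL U W p q (k + 1) →ₗ[ℂ] TL U W p q k :=
  DirectSum.toModule ℂ _ _ fun i =>
    if h : p + 1 ≤ i.1.1 then
      (DirectSum.lof ℂ (TIdx p q k) (fun j => BX U W j.1.1 j.1.2)
          ⟨(i.1.1 - 1, i.1.2), by have h2 := i.2; dsimp only at h2 ⊢; omega⟩).comp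
        ((Bh f (i.1.1 - 1) i.1.2).comp
          (BXcast (show (i.1.1 : ℤ) = i.1.1 - 1 + 1 by omega) rfl).toLinearMap)
    else 0

/-- The "error term" of the homotopy: `(id - ι_f L_α) ⊗ id` on the bottom row `r = p`. -/
noncomputable def TE (f : Module.Dual ℂ U) (α : U) (p q k : ℤ) :
    TL U W p q k →ₗ[ℂ] TL U W p q k :=
  DirectSum.toModule ℂ _ _ fun i =>
    if i.1.1 ≤ p then
      (DirectSum.lof ℂ (TIdx p q k) (fun j => BX U W j.1.1 j.1.2) i).comp
        (LinearMap.id - (Bh f i.1.1 i.1.2).comp (Bd1 α i.1.1 i.1.2))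
    else 0

lemma lof_congr {p q k : ℤ} {r s r' s' : ℤ} (h1 : r = r') (h2 : s = s')
    (h : r + s = k ∧ p ≤ r ∧ q ≤ s) (h' : r' + s' = k ∧ p ≤ r' ∧ q ≤ s')
    (v : BX U W r s) :
    DirectSum.lof ℂ (TIdx p q k) (fun j => BX U W j.1.1 j.1.2) ⟨(r, s), h⟩ v
      = DirectSum.lof ℂ (TIdx p q k) (fun j => BX U W j.1.1 j.1.2) ⟨(r', s'), h'⟩
          (BXcast h1 h2 v) := by
  subst h1; subst h2; rfl

lemma TLcast_rfl {p q k : ℤ} (h : k = k) (x : TL U W p q k) : TLcast U W p q h x = x := rfl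

lemma TLcast_TD (α : U) (β : W) (p q : ℤ) {k k' : ℤ} (h : k = k') (x : TL U W p q k) :
    TD α β p q k' (TLcast U W p q h x)
      = TLcast U W p q (by rw [h]) (TD α β p q k x) := by
  subst h; rfl

lemma TLcast_TLcast {p q : ℤ} {k k' k'' : ℤ} (h : k = k') (h' : k' = k'') (x : TL U W p q k) :
    TLcast U W p q h' (TLcast U W p q h x) = TLcast U W p q (h.trans h') x := by
  subst h; subst h'; rfl

/-- `D ∘ D = 0`. -/
lemma TD_TD (α : U) (β : W) (p q k : ℤ) (x : TL U W p q k) :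
    TD α β p q (k + 1) (TD α β p q k x) = 0 := by
  induction x using DirectSum.induction_on with
  | zero => simp
  | add x y hx hy => rw [map_add, map_add, hx, hy, add_zero]
  | of i v =>
    obtain ⟨⟨r, s⟩, hi⟩ := i
    rw [← DirectSum.lof_eq_of ℂ]
    simp only [TD, DirectSum.toModule_lof, LinearMap.add_apply, LinearMap.comp_apply, map_add,
      DirectSum.toModule_lof]
    rw [Bd1_Bd1, Bd2s_Bd2s, map_zero, map_zero, add_zero, zero_add, ← map_add, Bd_mixed,
      map_zero]

lemma lof_congr' {p q k : ℤ} {r s r' s' : ℤ} (h1 : r = r') (h2 : s = s')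
    (h : r + s = k ∧ p ≤ r ∧ q ≤ s) (v : BX U W r s) :
    DirectSum.lof ℂ (TIdx p q k) (fun j => BX U W j.1.1 j.1.2) ⟨(r, s), h⟩ v
      = DirectSum.lof ℂ (TIdx p q k) (fun j => BX U W j.1.1 j.1.2)
          ⟨(r', s'), by subst h1; subst h2; exact h⟩ (BXcast h1 h2 v) := by
  subst h1; subst h2; rfl

/-- The master homotopy identity `D h + h D = id - E`. -/
lemma master (f : Module.Dual ℂ U) (α : U) (β : W) (hf : f α = 1) (p q m : ℤ) (hp : 0 ≤ p)
    (x : TL U W p q (m + 1)) :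
    TD α β p q m (Th f p q m x) + Th f p q (m + 1) (TD α β p q (m + 1) x)
      = x - TE f α p q (m + 1) x := by
  induction x using DirectSum.induction_on with
  | zero => simp
  | add x y hx hy =>
    simp only [map_add]
    rw [add_add_add_comm, hx, hy]; abel
  | of i v =>
    obtain ⟨⟨r, s⟩, hi⟩ := i
    rw [← DirectSum.lof_eq_of ℂ]
    by_cases hr : p + 1 ≤ r
    · obtain ⟨a, rfl⟩ : ∃ a : ℕ, r = (a : ℤ) + 1 := ⟨(r - 1).toNat, by omega⟩
      have hi' : (a : ℤ) + 1 + s = m + 1 ∧ p ≤ (a : ℤ) + 1 ∧ q ≤ s := hi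
      have h₁ : (a : ℤ) = (a : ℤ) + 1 - 1 := by omega
      have h₂ : (a : ℤ) + 1 = (a : ℤ) + 1 + 1 - 1 := by omega
      simp only [TD, Th, TE, DirectSum.toModule_lof, LinearMap.add_apply, LinearMap.comp_apply,
        map_add, dif_pos hr, dif_pos (show p + 1 ≤ (a : ℤ) + 1 + 1 by omega),
        if_neg (show ¬((a : ℤ) + 1 ≤ p) by omega), LinearEquiv.coe_coe, LinearMap.zero_apply,
        sub_zero]
      rw [Bh_cast f h₁ rfl v,
        Bh_cast f h₂ rfl ((Bd1 α ((a : ℤ) + 1) s) v),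
        Bh_cast f h₁ rfl ((Bd2s β ((a : ℤ) + 1) s) v),
        Bd1_cast α h₁ rfl, Bd2s_cast β h₁ rfl]
      rw [← lof_congr' (show (a : ℤ) + 1 = (a : ℤ) + 1 - 1 + 1 by omega) rfl hi,
        ← lof_congr' h₁ rfl (show (a : ℤ) + (s + 1) = m + 1 ∧ p ≤ (a : ℤ) ∧ q ≤ s + 1 by omega),
        ← lof_congr' h₂ rfl hi,
        ← lof_congr' h₁ rfl (show (a : ℤ) + (s + 1) = m + 1 ∧ p ≤ (a : ℤ) ∧ q ≤ s + 1 by omega)]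
      have e1 : Bd1 α (a : ℤ) s (Bh f (a : ℤ) s v)
          + Bh f ((a : ℤ) + 1) s (Bd1 α ((a : ℤ) + 1) s v) = v := by
        exact (add_comm _ _).trans (Bh_Bd1 f α hf a s v)
      have e2 : Bd2s β (a : ℤ) s (Bh f (a : ℤ) s v)
          + Bh f (a : ℤ) (s + 1) (Bd2s β ((a : ℤ) + 1) s v) = 0 := by
        exact (add_comm _ _).trans (Bh_Bd2s f β a s v)
      rw [add_add_add_comm, ← map_add, ← map_add]
      simp only [e1, e2, map_zero, add_zero]
    · obtain ⟨a, rfl⟩ : ∃ a : ℕ, r = (a : ℤ) := ⟨r.toNat, by omega⟩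
      have hi' : (a : ℤ) + s = m + 1 ∧ p ≤ (a : ℤ) ∧ q ≤ s := hi
      have h₁ : (a : ℤ) = (a : ℤ) + 1 - 1 := by omega
      simp only [TD, Th, TE, DirectSum.toModule_lof, LinearMap.add_apply, LinearMap.comp_apply,
        map_add, dif_neg hr, dif_pos (show p + 1 ≤ (a : ℤ) + 1 by omega),
        if_pos (show (a : ℤ) ≤ p by omega), LinearEquiv.coe_coe, LinearMap.zero_apply,
        map_zero, zero_add, add_zero, LinearMap.sub_apply, LinearMap.id_apply]
      rw [Bh_cast f h₁ rfl ((Bd1 α (a : ℤ) s) v),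
        ← lof_congr' h₁ rfl hi]
      rw [← map_sub, sub_sub_cancel]

/-- `TE` is concentrated in the single bidegree `(p, k-p)`. -/
lemma TE_concentrated (f : Module.Dual ℂ U) (α : U) (p q k : ℤ)
    (hpk : p + (k - p) = k ∧ p ≤ p ∧ q ≤ k - p) (x : TL U W p q k) :
    ∃ w : BX U W p (k - p),
      TE f α p q k x = DirectSum.lof ℂ (TIdx p q k) (fun j => BX U W j.1.1 j.1.2)
        ⟨(p, k - p), hpk⟩ w := by
  induction x using DirectSum.induction_on with
  | zero => exact ⟨0, by rw [map_zero, map_zero]⟩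
  | add x y hx hy =>
    obtain ⟨w1, hw1⟩ := hx
    obtain ⟨w2, hw2⟩ := hy
    exact ⟨w1 + w2, by rw [map_add, hw1, hw2, ← map_add]⟩
  | of i v =>
    obtain ⟨⟨r, s⟩, hi⟩ := i
    rw [← DirectSum.lof_eq_of ℂ]
    by_cases hc : r ≤ p
    · have hi' : r + s = k ∧ p ≤ r ∧ q ≤ s := hi
      obtain rfl : p = r := by omega
      obtain rfl : k - p = s := by omega
      refine ⟨v - Bh f p (k - p) (Bd1 α p (k - p) v), ?_⟩
      simp only [TE, DirectSum.toModule_lof, if_pos le_rfl, LinearMap.comp_apply,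
        LinearMap.sub_apply, LinearMap.id_apply]
    · refine ⟨0, ?_⟩
      simp only [TE, DirectSum.toModule_lof, if_neg hc, LinearMap.zero_apply, map_zero]

lemma exists_dual_one {V : Type} [AddCommGroup V] [Module ℂ V] {v : V} (hv : v ≠ 0) :
    ∃ f : Module.Dual ℂ V, f v = 1 := by
  obtain ⟨φ, hφ⟩ : ∃ φ : Module.Dual ℂ V, φ v ≠ 0 := by
    by_contra h
    push_neg at h
    exact hv ((Module.forall_dual_apply_eq_zero_iff ℂ v).mp h)
  exact ⟨(φ v)⁻¹ • φ, by simp [inv_mul_cancel₀ hφ]⟩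

/-- The complex `T^k = ⊕_{r+s=k, r≥p, s≥q} Λ^r U ⊗ Λ^s W` with differential
`D = L_α + (-1)^r L_β` satisfies `D ∘ D = 0` and is exact in every degree
`k ≥ p + q + 1`, i.e. in all degrees strictly above its bottom degree `p + q`. -/
theorem upper_symbol_complex_exact (U W : Type) [AddCommGroup U] [Module ℂ U]
    [AddCommGroup W] [Module ℂ W] [FiniteDimensional ℂ U] [FiniteDimensional ℂ W]
    (α : U) (β : W) (hα : α ≠ 0) (hβ : β ≠ 0) (p q : ℤ) (hp : 0 ≤ p) (hq : 0 ≤ q) :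
    (∀ (k : ℤ) (x : TL U W p q k), TD α β p q (k + 1) (TD α β p q k x) = 0) ∧
    (∀ k : ℤ, p + q + 1 ≤ k → ∀ x : TL U W p q k, TD α β p q k x = 0 →
      ∃ y : TL U W p q (k - 1),
        TLcast U W p q (show k - 1 + 1 = k by omega) (TD α β p q (k - 1) y) = x) := by
  constructor
  · exact fun k x => TD_TD α β p q k x
  · intro k hk x hx
    obtain ⟨f, hf⟩ := exists_dual_one hα
    obtain ⟨g, hg⟩ := exists_dual_one hβ
    obtain ⟨pa, rfl⟩ : ∃ n : ℕ, p = (n : ℤ) := ⟨p.toNat, by omega⟩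
    obtain ⟨m, rfl⟩ : ∃ m : ℤ, k = m + 1 := ⟨k - 1, by omega⟩
    -- master identity, using closedness of x
    have hM := master f α β hf (pa : ℤ) q m hp x
    rw [hx, map_zero, add_zero] at hM
    -- hM : TD m (Th f pa q m x) = x - TE f α pa q (m+1) x
    set e := TE f α (pa : ℤ) q (m + 1) x with he
    -- e is closed
    have hDe : TD α β (pa : ℤ) q (m + 1) e = 0 := by
      have h1 : e = x - TD α β (pa : ℤ) q m (Th f (pa : ℤ) q m x) := by
        rw [hM]; abel
      rw [h1, map_sub, hx, TD_TD, sub_zero]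
    -- e is concentrated in bidegree (pa, m+1-pa)
    have hpk : (pa : ℤ) + (m + 1 - (pa : ℤ)) = m + 1 ∧ (pa : ℤ) ≤ (pa : ℤ)
        ∧ q ≤ m + 1 - (pa : ℤ) := by omega
    obtain ⟨w, hw⟩ := TE_concentrated f α (pa : ℤ) q (m + 1) hpk x
    rw [← he] at hw
    -- extract the two component equations from D e = 0
    rw [hw] at hDe
    simp only [TD, DirectSum.toModule_lof, LinearMap.add_apply, LinearMap.comp_apply] at hDe
    have h10 : Bd1 α (pa : ℤ) (m + 1 - (pa : ℤ)) w = 0 := by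
      have := congrArg (DirectSum.component ℂ (TIdx (pa : ℤ) q (m + 1 + 1))
        (fun j => BX U W j.1.1 j.1.2)
        ⟨((pa : ℤ) + 1, m + 1 - (pa : ℤ)), by constructor; omega; constructor <;> omega⟩) hDe
      rw [map_add, map_zero] at this
      rw [DirectSum.component.lof_self, DirectSum.component.of,
        dif_neg (by intro hcon; rw [Subtype.mk_eq_mk, Prod.mk.injEq] at hcon; omega),
        add_zero] at this
      exact this
    have h20 : Bd2s β (pa : ℤ) (m + 1 - (pa : ℤ)) w = 0 := by
      have := congrArg (DirectSum.component ℂ (TIdx (pa : ℤ) q (m + 1 + 1))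
        (fun j => BX U W j.1.1 j.1.2)
        ⟨((pa : ℤ), m + 1 - (pa : ℤ) + 1), by refine ⟨by omega, by omega, by omega⟩⟩) hDe
      rw [map_add, map_zero, DirectSum.component.lof_self, DirectSum.component.of,
        dif_neg (by intro hcon; rw [Subtype.mk_eq_mk, Prod.mk.injEq] at hcon; omega),
        zero_add] at this
      exact this
    -- move to natural indices
    obtain ⟨ba, hgb⟩ : ∃ b : ℕ, m + 1 - (pa : ℤ) = (b : ℤ) + 1 :=
      ⟨(m - pa).toNat, by omega⟩
    set w' : BX U W (pa : ℤ) ((ba : ℤ) + 1) := BXcast rfl hgb w with hw'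
    have h10' : Bd1 α (pa : ℤ) ((ba : ℤ) + 1) w' = 0 := by
      rw [hw', Bd1_cast α rfl hgb w, h10, map_zero]
    have h20' : Bd2u β (pa : ℤ) ((ba : ℤ) + 1) w' = 0 := by
      have hs : Bd2s β (pa : ℤ) ((ba : ℤ) + 1) w' = 0 := by
        rw [hw', Bd2s_cast β rfl hgb w, h20, map_zero]
      rw [Bd2s_eq_smul_Bd2u' β pa ba] at hs
      have hne : ((-1 : ℂ) ^ pa) ≠ 0 := pow_ne_zero _ (by norm_num)
      exact (smul_eq_zero_iff_right hne).mp hs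
    obtain ⟨u, hu1, hu2⟩ := stage2 α β g hg pa ba w' h10' h20'
    -- the correcting element in degree m
    have hbq : ((pa : ℤ) + (ba : ℤ) = m ∧ (pa : ℤ) ≤ (pa : ℤ) ∧ q ≤ (ba : ℤ)) := by omega
    set y₀ : TL U W (pa : ℤ) q m := DirectSum.lof ℂ (TIdx (pa : ℤ) q m)
      (fun j => BX U W j.1.1 j.1.2) ⟨((pa : ℤ), (ba : ℤ)), hbq⟩ u with hy₀
    have hDy₀ : TD α β (pa : ℤ) q m y₀ = e := by
      rw [hy₀]
      simp only [TD, DirectSum.toModule_lof, LinearMap.add_apply, LinearMap.comp_apply]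
      rw [hu2, map_zero, zero_add, hu1, hw', hw]
      rw [← lof_congr' rfl hgb hpk w]
    -- assemble
    refine ⟨TLcast U W (pa : ℤ) q (show m = m + 1 - 1 by omega)
      (Th f (pa : ℤ) q m x + y₀), ?_⟩
    rw [TLcast_TD α β (pa : ℤ) q (show m = m + 1 - 1 by omega), TLcast_TLcast]
    rw [map_add, hDy₀, hM]
    exact (congrArg _ (by abel : x - e + e = x)).trans (TLcast_rfl _ x)
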